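/- Let p : ℕ → ℝ be a probability mass function (p i ≥ 0, ∑ i, p i = 1) whose values are sorted in nonincreasing order, i.e., p i ≥ p j whenever i ≤ j. Fix K ≥ 1 with p K > 0 (indices 1..K are the top-K values). Then the Shannon entropy H = -∑ i, p i * log (p i) satisfies H ≥ -log (p K) - ∑_{i=1}^{K} p i * log (p i / p K). -/
import Mathlib


/-- Proposition 1 (PRO lower bound on predictive entropy): for a pmf `p`
(1-indexed, nonincreasing), the Shannon entropy is bounded below by the
PRO score computed from the top-`K` probabilities. -/
theorem entropy_ge_PRO (p : ℕ → ℝ) (K : ℕ)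
    (hnn : ∀ i, 0 ≤ p i)
    (hs : Summable (fun i => p (i + 1)))
    (hsum : ∑' i, p (i + 1) = 1)
    (hsort : ∀ i j, 1 ≤ i → i ≤ j → p j ≤ p i)
    (hK : 1 ≤ K) (hpK : 0 < p K)
    (hHs : Summable (fun i => p (i + 1) * Real.log (p (i + 1)))) :
    -∑' i, p (i + 1) * Real.log (p (i + 1)) ≥
      -Real.log (p K) - ∑ i ∈ Finset.Icc 1 K, p i * Real.log (p i / p K) := by
  have hIcc : ∀ f : ℕ → ℝ, ∑ i ∈ Finset.Icc 1 K, f i = ∑ i ∈ Finset.range K, f (i + 1) := by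
    intro f
    rw [← Finset.Ico_add_one_right_eq_Icc, Finset.sum_Ico_eq_sum_range]
    simp [Nat.add_comm]
  -- split sums at K
  have h1 : ∑ i ∈ Finset.range K, p (i + 1) + ∑' i, p (i + K + 1) = 1 := by
    have := Summable.sum_add_tsum_nat_add K hs
    rw [hsum] at this
    simpa [Nat.add_right_comm] using this
  have h2 : ∑ i ∈ Finset.range K, p (i + 1) * Real.log (p (i + 1))
      + ∑' i, p (i + K + 1) * Real.log (p (i + K + 1))
      = ∑' i, p (i + 1) * Real.log (p (i + 1)) := by
    have := Summable.sum_add_tsum_nat_add K hHs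
    simpa [Nat.add_right_comm] using this
  -- tail summability
  have hstail : Summable (fun i => p (i + K + 1)) := by
    have : Summable (fun i => p ((i + K) + 1)) := (summable_nat_add_iff (f := fun i => p (i + 1)) K).mpr hs
    simpa [Nat.add_right_comm] using this
  have hHstail : Summable (fun i => p (i + K + 1) * Real.log (p (i + K + 1))) := by
    have : Summable (fun i => p ((i + K) + 1) * Real.log (p ((i + K) + 1))) :=
      (summable_nat_add_iff (f := fun i => p (i + 1) * Real.log (p (i + 1))) K).mpr hHs
    simpa [Nat.add_right_comm] using this
  -- termwise bound for the tail
  have hterm : ∀ i, p (i + K + 1) * Real.log (p (i + K + 1))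
      ≤ p (i + K + 1) * Real.log (p K) := by
    intro i
    rcases lt_or_eq_of_le (hnn (i + K + 1)) with h | h
    · have hle : p (i + K + 1) ≤ p K := hsort K (i + K + 1) hK (by omega)
      exact mul_le_mul_of_nonneg_left (Real.log_le_log h hle) (le_of_lt h)
    · simp [← h]
  have htail : ∑' i, p (i + K + 1) * Real.log (p (i + K + 1))
      ≤ (∑' i, p (i + K + 1)) * Real.log (p K) := by
    rw [← tsum_mul_right]
    exact Summable.tsum_le_tsum hterm hHstail (hstail.mul_right _)
  -- rewrite the Icc sum
  have hlogdiv : ∑ i ∈ Finset.Icc 1 K, p i * Real.log (p i / p K)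
      = ∑ i ∈ Finset.Icc 1 K, (p i * Real.log (p i) - p i * Real.log (p K)) := by
    apply Finset.sum_congr rfl
    intro i hi
    obtain ⟨h1i, h2i⟩ := Finset.mem_Icc.mp hi
    have hpi : 0 < p i := lt_of_lt_of_le hpK (hsort i K h1i h2i)
    rw [Real.log_div (ne_of_gt hpi) (ne_of_gt hpK)]
    ring
  rw [hlogdiv, Finset.sum_sub_distrib, ← Finset.sum_mul, ← h2]
  have hSeq : ∑ i ∈ Finset.Icc 1 K, p i = ∑ i ∈ Finset.range K, p (i + 1) := hIcc p
  have hSg : ∑ i ∈ Finset.Icc 1 K, p i * Real.log (p i)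
      = ∑ i ∈ Finset.range K, p (i + 1) * Real.log (p (i + 1)) :=
    hIcc (fun i => p i * Real.log (p i))
  have hT : ∑' i, p (i + K + 1) = 1 - ∑ i ∈ Finset.range K, p (i + 1) := by linarith
  rw [hT] at htail
  rw [sub_mul, one_mul] at htail
  rw [hSg, hSeq]
  linarith
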